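/- Let X ⊆ ℝ^m be nonempty, closed, and convex, and let c : ℝ^m → ℝ^m be continuous on X. Then x* ∈ X is a neutrally stable state of (X, c) if and only if x* is a local minimum of (X, ⪯_c). -/

import Mathlib

open Set

noncomputable section

/-- The path point `y_ε = ε x + (1 - ε) y`. -/
def pathPt {m : ℕ} (x y : EuclideanSpace ℝ (Fin m)) (ε : ℝ) :
    EuclideanSpace ℝ (Fin m) :=
  ε • x + (1 - ε) • y

/-- The linear vector polyorder `x ⪯_c y`: for all `ε ∈ [0,1]`,
`⟨x, c(y_ε)⟩ ≤ ⟨y, c(y_ε)⟩`. -/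
def vecLe {m : ℕ} (c : EuclideanSpace ℝ (Fin m) → EuclideanSpace ℝ (Fin m))
    (x y : EuclideanSpace ℝ (Fin m)) : Prop :=
  ∀ ε ∈ Icc (0:ℝ) 1,
    (inner ℝ x (c (pathPt x y ε)) : ℝ) ≤ inner ℝ y (c (pathPt x y ε))

/-- The strict part `x ≺_c y` of the linear vector polyorder. -/
def vecLt {m : ℕ} (c : EuclideanSpace ℝ (Fin m) → EuclideanSpace ℝ (Fin m))
    (x y : EuclideanSpace ℝ (Fin m)) : Prop :=
  vecLe c x y ∧ ¬ vecLe c y x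

/-- `x*` is a neutrally stable state of `(X, c)`: on some neighborhood of `x*`
relative to `X`, every `x` satisfies `⟨x*, c(x)⟩ ≤ ⟨x, c(x)⟩`. -/
def IsNSS {m : ℕ} (X : Set (EuclideanSpace ℝ (Fin m)))
    (c : EuclideanSpace ℝ (Fin m) → EuclideanSpace ℝ (Fin m))
    (xs : EuclideanSpace ℝ (Fin m)) : Prop :=
  ∃ O : Set (EuclideanSpace ℝ (Fin m)), O ⊆ X ∧ O ∈ nhdsWithin xs X ∧
    ∀ x ∈ O, (inner ℝ xs (c x) : ℝ) ≤ inner ℝ x (c x)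

/-- `x*` is a local minimum of `(X, ⪯_c)`: it weakly dominates every point of
some neighborhood of `x*` relative to `X`. -/
def IsLocalMinPolyorder {m : ℕ} (X : Set (EuclideanSpace ℝ (Fin m)))
    (c : EuclideanSpace ℝ (Fin m) → EuclideanSpace ℝ (Fin m))
    (xs : EuclideanSpace ℝ (Fin m)) : Prop :=
  ∃ O : Set (EuclideanSpace ℝ (Fin m)), O ⊆ X ∧ O ∈ nhdsWithin xs X ∧
    ∀ x ∈ O, vecLe c xs x

/-- Neutrally stable states are exactly the local minima of `(X, ⪯_c)`. -/
theorem isNSS_iff_isLocalMinPolyorder {m : ℕ} (X : Set (EuclideanSpace ℝ (Fin m)))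
    (hXne : X.Nonempty) (hXcl : IsClosed X) (hXconv : Convex ℝ X)
    (c : EuclideanSpace ℝ (Fin m) → EuclideanSpace ℝ (Fin m)) (hc : ContinuousOn c X)
    (xs : EuclideanSpace ℝ (Fin m)) (hxs : xs ∈ X) :
    IsNSS X c xs ↔ IsLocalMinPolyorder X c xs := by
  constructor
  · rintro ⟨O, hOX, hOnhds, hO⟩
    obtain ⟨r, hr, hball⟩ := Metric.mem_nhdsWithin_iff.1 hOnhds
    refine ⟨Metric.ball xs r ∩ X, inter_subset_right, ?_, ?_⟩
    · exact Filter.inter_mem (mem_nhdsWithin_of_mem_nhds (Metric.ball_mem_nhds xs hr))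
        self_mem_nhdsWithin
    · rintro x ⟨hxb, hxX⟩
      -- all path points lie in O for ε ∈ [0,1]
      have hpathX : ∀ t ∈ Icc (0:ℝ) 1, pathPt xs x t ∈ X := by
        intro t ht
        exact hXconv hxs hxX ht.1 (by linarith [ht.2]) (by ring)
      have hpathO : ∀ t ∈ Icc (0:ℝ) 1, pathPt xs x t ∈ O := by
        intro t ht
        apply hball
        refine ⟨?_, hpathX t ht⟩
        have : pathPt xs x t - xs = (1 - t) • (x - xs) := by
          simp only [pathPt]
          module
        have hd : dist (pathPt xs x t) xs = (1 - t) * dist x xs := by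
          rw [dist_eq_norm, this, norm_smul, Real.norm_eq_abs,
            abs_of_nonneg (by linarith [ht.2]), dist_eq_norm]
        have hxd : dist x xs < r := Metric.mem_ball.1 hxb
        have hd0 : (0:ℝ) ≤ dist x xs := dist_nonneg
        rw [Metric.mem_ball, hd]
        nlinarith [ht.1, ht.2]
      -- inequality for ε < 1
      have hIco : ∀ t ∈ Ico (0:ℝ) 1,
          (inner ℝ xs (c (pathPt xs x t)) : ℝ) ≤ inner ℝ x (c (pathPt xs x t)) := by
        intro t ht
        have h := hO _ (hpathO t ⟨ht.1, le_of_lt ht.2⟩)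
        have hexp : (inner ℝ (pathPt xs x t) (c (pathPt xs x t)) : ℝ)
            = t * inner ℝ xs (c (pathPt xs x t)) + (1 - t) * inner ℝ x (c (pathPt xs x t)) := by
          simp [pathPt, inner_add_left, real_inner_smul_left, Finset.mul_sum, mul_assoc]
        rw [hexp] at h
        nlinarith [ht.2]
      intro t ht
      rcases lt_or_eq_of_le ht.2 with h1 | h1
      · exact hIco t ⟨ht.1, h1⟩
      · -- t = 1 : limiting argument
        subst h1
        have hpath1 : pathPt xs x 1 = xs := by
          simp [pathPt]
        rw [hpath1]
        -- g t = ⟨xs - x, c (pathPt xs x t)⟩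
        set g : ℝ → ℝ := fun t => inner ℝ (xs - x) (c (pathPt xs x t)) with hg
        have hcontPath : Continuous (fun t : ℝ => pathPt xs x t) := by
          unfold pathPt; fun_prop
        have hgcont : ContinuousOn g (Icc (0:ℝ) 1) := by
          apply ContinuousOn.inner continuousOn_const
          exact hc.comp hcontPath.continuousOn hpathX
        have hneg : ∀ t ∈ Ico (0:ℝ) 1, g t ≤ 0 := by
          intro t ht
          have := hIco t ht
          simp only [hg, inner_sub_left]
          linarith
        have hne : (nhdsWithin (1:ℝ) (Ico (0:ℝ) 1)).NeBot := by
          rw [← mem_closure_iff_nhdsWithin_neBot, closure_Ico (by norm_num : (0:ℝ) ≠ 1)]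
          exact ⟨zero_le_one, le_refl 1⟩
        have htend : Filter.Tendsto g (nhdsWithin (1:ℝ) (Ico (0:ℝ) 1)) (nhds (g 1)) :=
          (hgcont.continuousWithinAt (right_mem_Icc.2 zero_le_one)).mono Ico_subset_Icc_self
        have hg1 : g 1 ≤ 0 :=
          le_of_tendsto htend (Filter.eventually_inf_principal.2
            (Filter.Eventually.of_forall hneg))
        have : (inner ℝ (xs - x) (c xs) : ℝ) ≤ 0 := by
          have := hg1
          simpa [hg, hpath1] using this
        rw [inner_sub_left] at this
        linarith
  · rintro ⟨O, hOX, hOnhds, hO⟩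
    refine ⟨O, hOX, hOnhds, fun x hx => ?_⟩
    have := hO x hx 0 ⟨le_refl 0, zero_le_one⟩
    simpa [pathPt] using this
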